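/- Adding extra nonnegative voting rights v changes the clipped mean by at most 2Δ‖v‖₁/‖w‖₁: |ClMean(w, x | μ, Δ) − ClMean(w + v, x | μ, Δ)| ≤ 2 (‖v‖₁/‖w‖₁) Δ. -/

import Mathlib

/-- Clipping of `x` to the interval `[μ - Δ, μ + Δ]`. -/
def clip (x μ Δ : ℝ) : ℝ := max (μ - Δ) (min (μ + Δ) x)

/-- The clipped mean. -/
noncomputable def clMean {N : ℕ} (w x : Fin N → ℝ) (μ Δ : ℝ) : ℝ :=
  (∑ n, w n * clip (x n) μ Δ) / ∑ n, w n

/-- Adding extra nonnegative voting rights `v` changes the clipped mean by at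
most `2 Δ ‖v‖₁ / ‖w‖₁`. -/
theorem clMean_extra_weights {N : ℕ} (w v x : Fin N → ℝ)
    (hw : ∀ n, 0 ≤ w n) (hv : ∀ n, 0 ≤ v n)
    (hpos : 0 < ∑ n, w n) (μ Δ : ℝ) (hΔ : 0 ≤ Δ) :
    |clMean w x μ Δ - clMean (w + v) x μ Δ| ≤
      2 * ((∑ n, v n) / (∑ n, w n)) * Δ := by
  set c : Fin N → ℝ := fun n => clip (x n) μ Δ with hc
  set W := ∑ n, w n with hW
  set V := ∑ n, v n with hVdef
  set S := ∑ n, w n * c n with hS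
  set T := ∑ n, v n * c n with hT
  have hcl : ∀ n, μ - Δ ≤ c n ∧ c n ≤ μ + Δ := by
    intro n
    constructor
    · exact le_max_left _ _
    · apply max_le (by linarith) (min_le_left _ _)
  have hV : 0 ≤ V := Finset.sum_nonneg fun n _ => hv n
  have hWV : 0 < W + V := by linarith
  have hS1 : W * (μ - Δ) ≤ S := by
    rw [hW, Finset.sum_mul]
    exact Finset.sum_le_sum fun n _ =>
      mul_le_mul_of_nonneg_left (hcl n).1 (hw n)
  have hS2 : S ≤ W * (μ + Δ) := by
    rw [hW, Finset.sum_mul]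
    exact Finset.sum_le_sum fun n _ =>
      mul_le_mul_of_nonneg_left (hcl n).2 (hw n)
  have hT1 : V * (μ - Δ) ≤ T := by
    rw [hVdef, Finset.sum_mul]
    exact Finset.sum_le_sum fun n _ =>
      mul_le_mul_of_nonneg_left (hcl n).1 (hv n)
  have hT2 : T ≤ V * (μ + Δ) := by
    rw [hVdef, Finset.sum_mul]
    exact Finset.sum_le_sum fun n _ =>
      mul_le_mul_of_nonneg_left (hcl n).2 (hv n)
  have h1 : clMean w x μ Δ = S / W := rfl
  have h2 : clMean (w + v) x μ Δ = (S + T) / (W + V) := by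
    simp only [clMean, Pi.add_apply, add_mul, Finset.sum_add_distrib]
    rfl
  rw [h1, h2]
  have hkey : S / W - (S + T) / (W + V) = (S * V - T * W) / (W * (W + V)) := by
    field_simp
    ring
  rw [hkey, abs_div, abs_of_pos (mul_pos hpos hWV)]
  have hnum : |S * V - T * W| ≤ W * V * (2 * Δ) := by
    rw [abs_le]
    constructor
    · nlinarith [mul_le_mul_of_nonneg_right hS1 hV,
        mul_le_mul_of_nonneg_right hT2 hpos.le]
    · nlinarith [mul_le_mul_of_nonneg_right hS2 hV,
        mul_le_mul_of_nonneg_right hT1 hpos.le]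
  calc |S * V - T * W| / (W * (W + V)) ≤ W * V * (2 * Δ) / (W * (W + V)) := by
        gcongr
    _ ≤ 2 * (V / W) * Δ := by
        rw [div_le_iff₀ (mul_pos hpos hWV)]
        have : 2 * (V / W) * Δ * (W * (W + V)) = 2 * V * Δ * (W + V) := by
          field_simp
        rw [this]
        nlinarith
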